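/- For the triangle Δ = conv{(0,0),(1,0),(0,1)}, the maximal number A(n) of vertices of a lattice polygon contained in a translate of n·Δ satisfies A(3) = 6. -/

import Mathlib

open Pointwise

/-- Embedding of lattice points into the plane. -/
def latpt (p : ℤ × ℤ) : ℝ × ℝ := ((p.1 : ℝ), (p.2 : ℝ))

/-- The unimodular triangle. -/
noncomputable def Δ : Set (ℝ × ℝ) := convexHull ℝ {((0:ℝ),(0:ℝ)), (1,0), (0,1)}

/-- `A n` is the maximal number of vertices of a lattice polygon contained in a
translate of `n • Δ`. -/
noncomputable def A (n : ℕ) : ℕ :=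
  sSup {k : ℕ | ∃ V : Finset (ℤ × ℤ), V.Nonempty ∧
    (∃ t : ℝ × ℝ, convexHull ℝ (latpt '' (V : Set (ℤ × ℤ))) ⊆ (n : ℝ) • Δ + {t}) ∧
    (Set.extremePoints ℝ (convexHull ℝ (latpt '' (V : Set (ℤ × ℤ))))).ncard = k}

lemma latpt_inj : Function.Injective latpt := by
  intro p q h
  simp only [latpt, Prod.mk.injEq] at h
  exact Prod.ext (by exact_mod_cast h.1) (by exact_mod_cast h.2)

lemma comp1 (a b : ℝ) (x y : ℝ × ℝ) : (a • x + b • y).1 = a * x.1 + b * y.1 := rfl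
lemma comp2 (a b : ℝ) (x y : ℝ × ℝ) : (a • x + b • y).2 = a * x.2 + b * y.2 := rfl

lemma comb_le {t x y a b : ℝ} (h1 : t ≤ x) (h2 : t ≤ y) (ha : 0 ≤ a) (hb : 0 ≤ b)
    (hab : a + b = 1) : t ≤ a * x + b * y := by
  have ht : a * t + b * t = t := by rw [← add_mul, hab, one_mul]
  nlinarith [mul_le_mul_of_nonneg_left h1 ha, mul_le_mul_of_nonneg_left h2 hb]

lemma comb_ge {t x y a b : ℝ} (h1 : x ≤ t) (h2 : y ≤ t) (ha : 0 ≤ a) (hb : 0 ≤ b)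
    (hab : a + b = 1) : a * x + b * y ≤ t := by
  have ht : a * t + b * t = t := by rw [← add_mul, hab, one_mul]
  nlinarith [mul_le_mul_of_nonneg_left h1 ha, mul_le_mul_of_nonneg_left h2 hb]

lemma Δ_eq : Δ = {p : ℝ × ℝ | 0 ≤ p.1 ∧ 0 ≤ p.2 ∧ p.1 + p.2 ≤ 1} := by
  apply Set.Subset.antisymm
  · apply convexHull_min
    · rintro p hp
      simp only [Set.mem_insert_iff, Set.mem_singleton_iff] at hp
      rcases hp with h | h | h <;> subst h <;> norm_num
    · rintro x ⟨h1, h2, h3⟩ y ⟨h4, h5, h6⟩ a b ha hb hab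
      refine ⟨?_, ?_, ?_⟩ <;> simp only [Set.mem_setOf_eq, comp1, comp2]
      · exact comb_le h1 h4 ha hb hab
      · exact comb_le h2 h5 ha hb hab
      · have := comb_ge h3 h6 ha hb hab
        nlinarith
  · rintro ⟨x, y⟩ ⟨hx, hy, hxy⟩
    have hc := (convex_convexHull ℝ ({((0:ℝ),(0:ℝ)), (1,0), (0,1)} : Set (ℝ × ℝ)))
    have hmem := hc.sum_mem (t := (Finset.univ : Finset (Fin 3)))
      (w := ![1 - x - y, x, y]) (z := ![((0:ℝ),(0:ℝ)), (1,0), (0,1)])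
      (by intro i _; fin_cases i <;> simp at hx hy hxy ⊢ <;> linarith)
      (by simp [Fin.sum_univ_three]; ring)
      (by intro i _; fin_cases i <;> exact subset_convexHull ℝ _ (by simp))
    have key : (∑ i : Fin 3, ![1 - x - y, x, y] i • ![((0:ℝ),(0:ℝ)), (1,0), (0,1)] i)
        = ((x, y) : ℝ × ℝ) := by
      simp [Fin.sum_univ_three, Prod.ext_iff]
    rw [Δ, ← key]
    exact hmem

lemma tri_eq (t : ℝ × ℝ) : (3:ℝ) • Δ + {t}
    = {p : ℝ × ℝ | t.1 ≤ p.1 ∧ t.2 ≤ p.2 ∧ p.1 + p.2 ≤ t.1 + t.2 + 3} := by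
  ext p
  rw [Set.add_singleton]
  simp only [Set.mem_image, Set.mem_smul_set, Δ_eq, Set.mem_setOf_eq]
  constructor
  · rintro ⟨_, ⟨q, ⟨hq1, hq2, hq3⟩, rfl⟩, rfl⟩
    have e1 : ((3:ℝ) • q + t).1 = 3 * q.1 + t.1 := rfl
    have e2 : ((3:ℝ) • q + t).2 = 3 * q.2 + t.2 := rfl
    rw [e1, e2]
    refine ⟨by linarith, by linarith, by linarith⟩
  · rintro ⟨h1, h2, h3⟩
    refine ⟨(3:ℝ) • ((3:ℝ)⁻¹ • (p - t)), ⟨(3:ℝ)⁻¹ • (p - t), ⟨?_, ?_, ?_⟩, rfl⟩, ?_⟩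
    · show (0:ℝ) ≤ 3⁻¹ * (p.1 - t.1)
      linarith
    · show (0:ℝ) ≤ 3⁻¹ * (p.2 - t.2)
      linarith
    · show 3⁻¹ * (p.1 - t.1) + 3⁻¹ * (p.2 - t.2) ≤ 1
      linarith
    · refine Prod.ext ?_ ?_
      · show 3 * (3⁻¹ * (p.1 - t.1)) + t.1 = p.1
        field_simp
        ring
      · show 3 * (3⁻¹ * (p.2 - t.2)) + t.2 = p.2
        field_simp
        ring

lemma ext_mem {F : Set (ℝ × ℝ)} {x : ℝ × ℝ} (c1 c2 : ℝ) (hx : x ∈ F)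
    (h : ∀ y ∈ F, y ≠ x → c1 * y.1 + c2 * y.2 < c1 * x.1 + c2 * x.2) :
    x ∈ Set.extremePoints ℝ (convexHull ℝ F) := by
  set f : ℝ × ℝ → ℝ := fun p => c1 * p.1 + c2 * p.2 with hf
  have hfcomb : ∀ (a b : ℝ) (y z : ℝ × ℝ), f (a • y + b • z) = a * f y + b * f z := by
    intro a b y z
    simp only [hf, comp1, comp2]
    ring
  have hC : Convex ℝ {y : ℝ × ℝ | f y < f x ∨ y = x} := by
    rintro y hy z hz a b ha hb hab
    rcases eq_or_lt_of_le ha with ha0 | ha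
    · have hb1 : b = 1 := by linarith
      have : a • y + b • z = z := by rw [← ha0, hb1, zero_smul, one_smul, zero_add]
      rwa [Set.mem_setOf_eq, this]
    rcases eq_or_lt_of_le hb with hb0 | hb
    · have ha1 : a = 1 := by linarith
      have : a • y + b • z = y := by rw [← hb0, ha1, zero_smul, one_smul, add_zero]
      rwa [Set.mem_setOf_eq, this]
    have ht : a * f x + b * f x = f x := by rw [← add_mul, hab, one_mul]
    rcases hy with hy | hy <;> rcases hz with hz | hz
    · left
      rw [hfcomb]
      have h1 := mul_lt_mul_of_pos_left hy ha
      have h2 := mul_lt_mul_of_pos_left hz hb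
      linarith
    · left
      rw [hfcomb, hz]
      have h1 := mul_lt_mul_of_pos_left hy ha
      linarith
    · left
      rw [hfcomb, hy]
      have h2 := mul_lt_mul_of_pos_left hz hb
      linarith
    · right
      rw [hy, hz]
      exact Convex.combo_self hab x
  have hsub : convexHull ℝ F ⊆ {y : ℝ × ℝ | f y < f x ∨ y = x} := by
    apply convexHull_min ?_ hC
    intro y hy
    by_cases hyx : y = x
    · exact Or.inr hyx
    · exact Or.inl (h y hy hyx)
  rw [mem_extremePoints]
  refine ⟨subset_convexHull ℝ F hx, ?_⟩
  intro x1 h1 x2 h2 hseg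
  obtain ⟨a, b, ha, hb, hab, heq⟩ := hseg
  have key : ∀ z1 z2 : ℝ × ℝ, ∀ a b : ℝ, 0 < a → 0 < b → a + b = 1 →
      a • z1 + b • z2 = x → z2 = x → z1 = x := by
    intro z1 z2 a b ha hb hab heq hz2
    rw [hz2] at heq
    have step : a • z1 = a • x := by
      calc a • z1 = (a • z1 + b • x) - b • x := by abel
        _ = x - b • x := by rw [heq]
        _ = (1 - b) • x := by rw [sub_smul, one_smul]
        _ = a • x := by rw [show (1:ℝ) - b = a by linarith]
    exact smul_right_injective (ℝ × ℝ) (ne_of_gt ha) step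
  have hx1 := hsub h1
  have hx2 := hsub h2
  rcases hx1 with hlt1 | he1
  · rcases hx2 with hlt2 | he2
    · exfalso
      have : f x = a * f x1 + b * f x2 := by rw [← hfcomb, heq]
      have h1' := mul_lt_mul_of_pos_left hlt1 ha
      have h2' := mul_lt_mul_of_pos_left hlt2 hb
      have ht : a * f x + b * f x = f x := by rw [← add_mul, hab, one_mul]
      linarith
    · exact ⟨key x1 x2 a b ha hb hab heq he2, he2⟩
  · refine ⟨he1, ?_⟩
    apply key x2 x1 b a hb ha (by linarith) ?_ he1
    rw [← heq]; abel

def hexV : Finset (ℤ × ℤ) := {(1,0),(2,0),(0,1),(2,1),(0,2),(1,2)}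

lemma hex_img : latpt '' (hexV : Set (ℤ × ℤ))
    = {((1:ℝ),(0:ℝ)), (2,0), (0,1), (2,1), (0,2), (1,2)} := by
  have : (hexV : Set (ℤ × ℤ))
      = {((1:ℤ),(0:ℤ)), (2,0), (0,1), (2,1), (0,2), (1,2)} := by
    simp [hexV]
  rw [this]
  simp only [Set.image_insert_eq, Set.image_singleton]
  norm_num [latpt]

lemma hex_extreme : Set.extremePoints ℝ (convexHull ℝ (latpt '' (hexV : Set (ℤ × ℤ))))
    = latpt '' (hexV : Set (ℤ × ℤ)) := by
  apply Set.Subset.antisymm extremePoints_convexHull_subset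
  rw [hex_img]
  rintro p (rfl | rfl | rfl | rfl | rfl | rfl)
  · exact ext_mem (-1) (-2) (by norm_num) (by
      rintro y (rfl | rfl | rfl | rfl | rfl | rfl) hne <;> revert hne <;> norm_num)
  · exact ext_mem 1 (-1) (by norm_num) (by
      rintro y (rfl | rfl | rfl | rfl | rfl | rfl) hne <;> revert hne <;> norm_num)
  · exact ext_mem (-2) (-1) (by norm_num) (by
      rintro y (rfl | rfl | rfl | rfl | rfl | rfl) hne <;> revert hne <;> norm_num)
  · exact ext_mem 2 1 (by norm_num) (by
      rintro y (rfl | rfl | rfl | rfl | rfl | rfl) hne <;> revert hne <;> norm_num)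
  · exact ext_mem (-1) 1 (by norm_num) (by
      rintro y (rfl | rfl | rfl | rfl | rfl | rfl) hne <;> revert hne <;> norm_num)
  · exact ext_mem 1 2 (by norm_num) (by
      rintro y (rfl | rfl | rfl | rfl | rfl | rfl) hne <;> revert hne <;> norm_num)

lemma convex_tri (t : ℝ × ℝ) :
    Convex ℝ {p : ℝ × ℝ | t.1 ≤ p.1 ∧ t.2 ≤ p.2 ∧ p.1 + p.2 ≤ t.1 + t.2 + 3} := by
  rintro x ⟨h1, h2, h3⟩ y ⟨h4, h5, h6⟩ a b ha hb hab
  refine ⟨?_, ?_, ?_⟩ <;> simp only [Set.mem_setOf_eq, comp1, comp2]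
  · exact comb_le h1 h4 ha hb hab
  · exact comb_le h2 h5 ha hb hab
  · have := comb_ge h3 h6 ha hb hab
    nlinarith

lemma lower_mem : ∃ V : Finset (ℤ × ℤ), V.Nonempty ∧
    (∃ t : ℝ × ℝ, convexHull ℝ (latpt '' (V : Set (ℤ × ℤ))) ⊆ ((3:ℕ) : ℝ) • Δ + {t}) ∧
    (Set.extremePoints ℝ (convexHull ℝ (latpt '' (V : Set (ℤ × ℤ))))).ncard = 6 := by
  refine ⟨hexV, by decide, ⟨((0:ℝ),(0:ℝ)), ?_⟩, ?_⟩
  · have h3 : ((3:ℕ) : ℝ) = (3:ℝ) := by norm_num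
    rw [h3, tri_eq]
    apply convexHull_min ?_ (convex_tri _)
    rw [hex_img]
    rintro p (rfl | rfl | rfl | rfl | rfl | rfl) <;> norm_num
  · rw [hex_extreme, Set.ncard_image_of_injective _ latpt_inj, Set.ncard_coe_finset]
    decide

def T3 : Finset (ℤ × ℤ) := {(0,0),(1,0),(2,0),(3,0),(0,1),(1,1),(2,1),(0,2),(1,2),(0,3)}

lemma mem_T3 {q : ℤ × ℤ} (h1 : 0 ≤ q.1) (h2 : 0 ≤ q.2) (h3 : q.1 + q.2 ≤ 3) : q ∈ T3 := by
  obtain ⟨x, y⟩ := q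
  simp only at h1 h2 h3
  have hx3 : x ≤ 3 := by omega
  have hy3 : y ≤ 3 := by omega
  interval_cases x <;> interval_cases y <;> simp_all <;> decide

set_option maxHeartbeats 2000000 in
set_option maxRecDepth 10000 in
lemma seven (W : Finset (ℤ × ℤ)) (hW : W ∈ T3.powersetCard 7) :
    ∃ u ∈ W, ∃ v ∈ W, ∃ m ∈ W, u ≠ v ∧ (u + v = m + m ∨ u + u + v = m + m + m) := by
  revert W
  decide

lemma seg_mem {u v m : ℤ × ℤ} (h : u + v = m + m ∨ u + u + v = m + m + m) :
    latpt m ∈ openSegment ℝ (latpt u) (latpt v) := by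
  rcases h with h | h
  · have h1 : u.1 + v.1 = m.1 + m.1 := by rw [Prod.ext_iff] at h; exact_mod_cast h.1
    have h2 : u.2 + v.2 = m.2 + m.2 := by rw [Prod.ext_iff] at h; exact_mod_cast h.2
    refine ⟨1/2, 1/2, by norm_num, by norm_num, by norm_num, ?_⟩
    refine Prod.ext ?_ ?_
    · show (1/2 : ℝ) * (u.1 : ℝ) + (1/2 : ℝ) * (v.1 : ℝ) = (m.1 : ℝ)
      have : ((u.1 : ℝ) + (v.1 : ℝ)) = (m.1 : ℝ) + (m.1 : ℝ) := by exact_mod_cast h1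
      linarith
    · show (1/2 : ℝ) * (u.2 : ℝ) + (1/2 : ℝ) * (v.2 : ℝ) = (m.2 : ℝ)
      have : ((u.2 : ℝ) + (v.2 : ℝ)) = (m.2 : ℝ) + (m.2 : ℝ) := by exact_mod_cast h2
      linarith
  · have h1 : u.1 + u.1 + v.1 = m.1 + m.1 + m.1 := by rw [Prod.ext_iff] at h; exact_mod_cast h.1
    have h2 : u.2 + u.2 + v.2 = m.2 + m.2 + m.2 := by rw [Prod.ext_iff] at h; exact_mod_cast h.2
    refine ⟨2/3, 1/3, by norm_num, by norm_num, by norm_num, ?_⟩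
    refine Prod.ext ?_ ?_
    · show (2/3 : ℝ) * (u.1 : ℝ) + (1/3 : ℝ) * (v.1 : ℝ) = (m.1 : ℝ)
      have : ((u.1 : ℝ) + (u.1:ℝ) + (v.1 : ℝ)) = (m.1 : ℝ) + (m.1 : ℝ) + (m.1:ℝ) := by
        exact_mod_cast h1
      linarith
    · show (2/3 : ℝ) * (u.2 : ℝ) + (1/3 : ℝ) * (v.2 : ℝ) = (m.2 : ℝ)
      have : ((u.2 : ℝ) + (u.2:ℝ) + (v.2 : ℝ)) = (m.2 : ℝ) + (m.2 : ℝ) + (m.2:ℝ) := by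
        exact_mod_cast h2
      linarith

lemma upper_bound {k : ℕ} (V : Finset (ℤ × ℤ)) (t : ℝ × ℝ)
    (hsub : convexHull ℝ (latpt '' (V : Set (ℤ × ℤ))) ⊆ ((3:ℕ) : ℝ) • Δ + {t})
    (hk : (Set.extremePoints ℝ (convexHull ℝ (latpt '' (V : Set (ℤ × ℤ))))).ncard = k) :
    k ≤ 6 := by
  by_contra hlt
  push_neg at hlt
  have h3 : ((3:ℕ) : ℝ) = (3:ℝ) := by norm_num
  rw [h3, tri_eq] at hsub
  set S := Set.extremePoints ℝ (convexHull ℝ (latpt '' (V : Set (ℤ × ℤ)))) with hS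
  have hSV : S ⊆ latpt '' ↑V := extremePoints_convexHull_subset
  have hSc : S ⊆ convexHull ℝ (latpt '' (V : Set (ℤ × ℤ))) := extremePoints_subset
  set Z : Set (ℤ × ℤ) := ↑V ∩ latpt ⁻¹' S with hZ
  have hZfin : Z.Finite := (V.finite_toSet).subset Set.inter_subset_left
  have himg : latpt '' Z = S := by
    apply Set.Subset.antisymm
    · rintro _ ⟨p, ⟨_, hp2⟩, rfl⟩; exact hp2
    · intro s hs
      obtain ⟨p, hpV, rfl⟩ := hSV hs
      exact ⟨p, ⟨hpV, hs⟩, rfl⟩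
  have hZcard : Z.ncard = k := by
    rw [← hk, ← himg, Set.ncard_image_of_injective _ latpt_inj]
  set a := ⌈t.1⌉ with ha
  set b := ⌈t.2⌉ with hb
  have hbound : ∀ p ∈ Z, a ≤ p.1 ∧ b ≤ p.2 ∧ p.1 + p.2 ≤ a + b + 3 := by
    intro p hp
    have hmem := hsub (hSc (himg ▸ Set.mem_image_of_mem latpt hp))
    obtain ⟨hb1, hb2, hb3⟩ := hmem
    have e1 : (latpt p).1 = (p.1 : ℝ) := rfl
    have e2 : (latpt p).2 = (p.2 : ℝ) := rfl
    rw [e1] at hb1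
    rw [e2] at hb2
    rw [e1, e2] at hb3
    refine ⟨Int.ceil_le.2 hb1, Int.ceil_le.2 hb2, ?_⟩
    have c1 := Int.le_ceil t.1
    have c2 := Int.le_ceil t.2
    have : ((p.1 + p.2 : ℤ) : ℝ) ≤ ((a + b + 3 : ℤ) : ℝ) := by
      push_cast
      linarith
    exact_mod_cast this
  set W0 := hZfin.toFinset with hW0
  have hW0card : 7 ≤ W0.card := by
    rw [hW0, ← Set.ncard_eq_toFinset_card _ hZfin, hZcard]
    omega
  set shift : ℤ × ℤ → ℤ × ℤ := fun p => (p.1 - a, p.2 - b) with hshift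
  have hshift_inj : Function.Injective shift := by
    intro p q h
    have h1 := congrArg Prod.fst h
    have h2 := congrArg Prod.snd h
    simp only [hshift] at h1 h2
    exact Prod.ext (by omega) (by omega)
  set W1 := W0.image shift with hW1
  have hW1card : W1.card = W0.card := Finset.card_image_of_injective _ hshift_inj
  have hW1T3 : W1 ⊆ T3 := by
    intro q hq
    obtain ⟨p, hp, rfl⟩ := Finset.mem_image.1 hq
    have hpZ : p ∈ Z := hZfin.mem_toFinset.1 hp
    obtain ⟨b1, b2, b3⟩ := hbound p hpZ
    exact mem_T3 (show (0:ℤ) ≤ p.1 - a by omega) (show (0:ℤ) ≤ p.2 - b by omega)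
      (show p.1 - a + (p.2 - b) ≤ 3 by omega)
  obtain ⟨W7, hsub7, hcard7⟩ := Finset.exists_subset_card_eq (s := W1) (n := 7) (by omega)
  have hW7 : W7 ∈ T3.powersetCard 7 :=
    Finset.mem_powersetCard.2 ⟨hsub7.trans hW1T3, hcard7⟩
  obtain ⟨u, hu, v, hv, m, hm, hne, hrel⟩ := seven W7 hW7
  obtain ⟨pu, hpu, hpueq⟩ := Finset.mem_image.1 (hsub7 hu)
  obtain ⟨pv, hpv, hpveq⟩ := Finset.mem_image.1 (hsub7 hv)
  obtain ⟨pm, hpm, hpmeq⟩ := Finset.mem_image.1 (hsub7 hm)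
  have hrel' : pu + pv = pm + pm ∨ pu + pu + pv = pm + pm + pm := by
    rw [← hpueq, ← hpveq, ← hpmeq] at hrel
    rcases hrel with h | h
    · left
      have h1 := congrArg Prod.fst h
      have h2 := congrArg Prod.snd h
      simp only [hshift, Prod.fst_add, Prod.snd_add] at h1 h2
      exact Prod.ext (by simpa using by omega) (by simpa using by omega)
    · right
      have h1 := congrArg Prod.fst h
      have h2 := congrArg Prod.snd h
      simp only [hshift, Prod.fst_add, Prod.snd_add] at h1 h2
      exact Prod.ext (by simpa using by omega) (by simpa using by omega)
  have hpune : pu ≠ pv := fun hcon => hne (by rw [← hpueq, ← hpveq, hcon])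
  have hmS : latpt pm ∈ S := by
    rw [← himg]
    exact Set.mem_image_of_mem _ (hZfin.mem_toFinset.1 hpm)
  have huC : latpt pu ∈ convexHull ℝ (latpt '' (V : Set (ℤ × ℤ))) := by
    apply hSc
    rw [← himg]
    exact Set.mem_image_of_mem _ (hZfin.mem_toFinset.1 hpu)
  have hvC : latpt pv ∈ convexHull ℝ (latpt '' (V : Set (ℤ × ℤ))) := by
    apply hSc
    rw [← himg]
    exact Set.mem_image_of_mem _ (hZfin.mem_toFinset.1 hpv)
  have hext := (mem_extremePoints.1 hmS).2 (latpt pu) huC (latpt pv) hvC (seg_mem hrel')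
  exact hpune (latpt_inj (hext.1.trans hext.2.symm))

theorem stmt15 : A 3 = 6 := by
  unfold A
  have hub : ∀ k ∈ {k : ℕ | ∃ V : Finset (ℤ × ℤ), V.Nonempty ∧
      (∃ t : ℝ × ℝ, convexHull ℝ (latpt '' (V : Set (ℤ × ℤ))) ⊆ ((3:ℕ) : ℝ) • Δ + {t}) ∧
      (Set.extremePoints ℝ (convexHull ℝ (latpt '' (V : Set (ℤ × ℤ))))).ncard = k}, k ≤ 6 := by
    rintro k ⟨V, hV, ⟨t, hsub⟩, hk⟩
    exact upper_bound V t hsub hk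
  have hmem : 6 ∈ {k : ℕ | ∃ V : Finset (ℤ × ℤ), V.Nonempty ∧
      (∃ t : ℝ × ℝ, convexHull ℝ (latpt '' (V : Set (ℤ × ℤ))) ⊆ ((3:ℕ) : ℝ) • Δ + {t}) ∧
      (Set.extremePoints ℝ (convexHull ℝ (latpt '' (V : Set (ℤ × ℤ))))).ncard = k} := lower_mem
  apply le_antisymm
  · exact csSup_le ⟨6, hmem⟩ hub
  · exact le_csSup ⟨6, hub⟩ hmem
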